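/- arXiv:2101.04647 — 3 statements merged into one kernel-verified Lean document; each statement's English description precedes it below -/
import Mathlib

section
/- A function φ lies in the kernel of the turning operator L if and only if φ(w) = c · q(w)/μ(w) for some constant c; in particular ker(L) is one-dimensional, spanned by T(w) = q(w)/(C μ(w)) with C = ∫_V q/μ dw. -/
open MeasureTheory

/-- A function `φ` lies in the kernel of the turning operator `L` if and only if
`φ(w) = c · q(w)/(C μ(w))` for some constant `c`; i.e. `ker L` is spanned by
`T(w) = q(w)/(C μ(w))` with `C = ∫_V q/μ dw`. -/
theorem kernel_of_turning_operator
    {V : Type*} [MeasurableSpace V] (ν : Measure V)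
    (q μ φ : V → ℝ)
    (hq_pos : ∀ w, 0 < q w) (hq_int : Integrable q ν)
    (hq_norm : ∫ w, q w ∂ν = 1)
    (hμ_pos : ∀ w, 0 < μ w)
    (hqμ_int : Integrable (fun w => q w / μ w) ν)
    (C : ℝ) (hC : C = ∫ w, q w / μ w ∂ν) (hC_pos : 0 < C)
    (hμφ_int : Integrable (fun w => μ w * φ w) ν) :
    (∀ w, -(μ w * φ w) + q w * (∫ w', μ w' * φ w' ∂ν) = 0)
      ↔ ∃ c : ℝ, ∀ w, φ w = c * (q w / (C * μ w)) := by
  constructor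
  · intro h
    set I := ∫ w', μ w' * φ w' ∂ν with hI
    refine ⟨I * C, fun w => ?_⟩
    have hw := h w
    have hμw := (hμ_pos w).ne'
    have hCne := hC_pos.ne'
    have hmain : μ w * φ w = q w * I := by linarith
    rw [show I * C * (q w / (C * μ w)) = q w * I / μ w by field_simp,
      eq_div_iff hμw]
    linarith
  · rintro ⟨c, hc⟩ w
    have key : ∀ w', μ w' * φ w' = (c / C) * q w' := by
      intro w'
      have h1 := (hμ_pos w').ne'
      have h2 := hC_pos.ne'
      rw [hc w']
      field_simp
    have hint : (∫ w', μ w' * φ w' ∂ν) = c / C := by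
      simp_rw [key]
      rw [integral_const_mul, hq_norm, mul_one]
    rw [hint, key w]
    ring
end

section
/- If q(w) is proportional to μ(w)² (i.e., q = c μ² with c > 0), then the macroscopic diffusion tensor D = ∫_V w ⊗ w · T(w)/μ(w) dw is a scalar multiple of the identity matrix, provided V = s S^{d-1} is a sphere of radius s. -/
open MeasureTheory

/-- If `q(w) = c μ(w)²`, the macroscopic diffusion tensor
`D = ∫_V w ⊗ w · T(w)/μ(w) dw` is a scalar multiple of the identity matrix,
where `V = s·S^{d-1}` carries its (rotation-invariant) uniform surface measure. -/
theorem diffusion_tensor_isotropic_of_q_eq_mu_sq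
    {d : ℕ} (s : ℝ) (hs : 0 < s)
    (ν : Measure (EuclideanSpace ℝ (Fin d)))
    -- ν is the uniform surface measure on the sphere of radius s:
    -- it is supported on the sphere and invariant under all linear isometries.
    (hsupp : ∀ᵐ w ∂ν, ‖w‖ = s)
    (hrot : ∀ O : EuclideanSpace ℝ (Fin d) ≃ₗᵢ[ℝ] EuclideanSpace ℝ (Fin d),
      ν.map O = ν)
    (μ q : EuclideanSpace ℝ (Fin d) → ℝ)
    (hμ_pos : ∀ w, 0 < μ w) (hμ_cont : Continuous μ)
    (c : ℝ) (hc : 0 < c) (hq : ∀ w, q w = c * (μ w)^2)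
    (hq_norm : ∫ w, q w ∂ν = 1)
    (C : ℝ) (hC : C = ∫ w, q w / μ w ∂ν) (hC_pos : 0 < C)
    (T : EuclideanSpace ℝ (Fin d) → ℝ) (hT : ∀ w, T w = q w / (C * μ w))
    (D : Matrix (Fin d) (Fin d) ℝ)
    (hD : ∀ i j, D i j = ∫ w, w i * w j * (T w / μ w) ∂ν) :
    ∃ a : ℝ, D = a • (1 : Matrix (Fin d) (Fin d) ℝ) := by
  classical
  have hTμ : ∀ w, T w / μ w = c / C := by
    intro w
    have hμ := (hμ_pos w).ne'
    have hCne := hC_pos.ne'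
    rw [hT, hq]
    field_simp
  have hmeas : ∀ i : Fin d, Measurable (fun w : EuclideanSpace ℝ (Fin d) => w i) :=
    fun i => (EuclideanSpace.proj i : EuclideanSpace ℝ (Fin d) →L[ℝ] ℝ).continuous.measurable
  have key : ∀ (O : EuclideanSpace ℝ (Fin d) ≃ₗᵢ[ℝ] EuclideanSpace ℝ (Fin d)) (i j : Fin d),
      ∫ w, w i * w j ∂ν = ∫ w, (O w) i * (O w) j ∂ν := by
    intro O i j
    conv_lhs => rw [← hrot O]
    exact integral_map O.continuous.measurable.aemeasurable
      (((hmeas i).mul (hmeas j)).aestronglyMeasurable)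
  -- off-diagonal entries vanish
  have hoff : ∀ i j : Fin d, i ≠ j → (∫ w, w i * w j ∂ν) = 0 := by
    intro i j hij
    set O : EuclideanSpace ℝ (Fin d) ≃ₗᵢ[ℝ] EuclideanSpace ℝ (Fin d) :=
      LinearIsometryEquiv.piLpCongrRight 2
        (fun k => if k = i then LinearIsometryEquiv.neg ℝ else LinearIsometryEquiv.refl ℝ ℝ)
      with hO
    have hOi : ∀ w : EuclideanSpace ℝ (Fin d), (O w) i = -(w i) := by
      intro w; simp [hO, LinearIsometryEquiv.piLpCongrRight_apply]
    have hOj : ∀ w : EuclideanSpace ℝ (Fin d), (O w) j = w j := by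
      intro w; simp [hO, LinearIsometryEquiv.piLpCongrRight_apply, hij.symm]
    have h := key O i j
    simp only [hOi, hOj] at h
    have h2 : ∫ w, -(w i) * w j ∂ν = -∫ w, w i * w j ∂ν := by
      simp_rw [neg_mul]
      exact integral_neg _
    rw [h2] at h
    linarith
  -- diagonal entries are all equal
  have hdiag : ∀ i j : Fin d, (∫ w, w i * w i ∂ν) = ∫ w, w j * w j ∂ν := by
    intro i j
    set O : EuclideanSpace ℝ (Fin d) ≃ₗᵢ[ℝ] EuclideanSpace ℝ (Fin d) :=
      LinearIsometryEquiv.piLpCongrLeft 2 ℝ ℝ (Equiv.swap i j) with hO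
    have hOi : ∀ w : EuclideanSpace ℝ (Fin d), (O w) i = w j := by
      intro w
      simp only [hO, LinearIsometryEquiv.piLpCongrLeft_apply, Equiv.piCongrLeft'_apply,
        Equiv.symm_swap]
      rw [Equiv.swap_apply_left]
    have h := key O i i
    simp only [hOi] at h
    exact h
  have hDij : ∀ i j, D i j = (c / C) * ∫ w, w i * w j ∂ν := by
    intro i j
    rw [hD]
    simp_rw [hTμ]
    rw [integral_mul_const, mul_comm]
  rcases Nat.eq_zero_or_pos d with hd | hd
  · refine ⟨0, ?_⟩
    ext i j
    exact absurd i.2 (by omega)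
  · set i0 : Fin d := ⟨0, hd⟩
    refine ⟨(c / C) * ∫ w, w i0 * w i0 ∂ν, ?_⟩
    ext i j
    rw [hDij, Matrix.smul_apply, Matrix.one_apply]
    by_cases hij : i = j
    · subst hij
      simp [hdiag i i0]
    · simp [hij, hoff i j hij]
end

section
/- The normalization constant for the criss-cross network with μ ∝ 1/q satisfies C = ∫_{S¹} (π/2)(bvM_{k,e1} + bvM_{k,e2})² dw = (I₀(2k) + 1 + 2 I₀(√2 k)) / (4 I₀(k)²), and its isotropic limit is lim_{k→0} C = 1. -/
open MeasureTheory Real Filter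

/-- Modified Bessel function of the first kind of order 0. -/
noncomputable def besselI0 (k : ℝ) : ℝ :=
  (1 / (2 * π)) * ∫ θ in (0:ℝ)..(2 * π), Real.exp (k * Real.cos θ)

/-- Bimodal von Mises density on the unit circle (parametrized by angle `θ`),
with concentration `k` and axis given by the unit vector at angle `α`. -/
noncomputable def bvM (k α θ : ℝ) : ℝ :=
  (1 / (4 * π * besselI0 k)) *
    (Real.exp (k * Real.cos (θ - α)) + Real.exp (-(k * Real.cos (θ - α))))

/-- The normalization constant for the criss-cross network with `μ ∝ 1/q`. -/
noncomputable def Cnorm (k : ℝ) : ℝ :=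
  ∫ θ in (0:ℝ)..(2 * π), (π / 2) * (bvM k 0 θ + bvM k (π / 2) θ)^2

lemma contExpCos (a φ : ℝ) : Continuous fun θ : ℝ => Real.exp (a * Real.cos (θ - φ)) := by
  fun_prop

lemma intExpCos (a φ b c : ℝ) :
    IntervalIntegrable (fun θ : ℝ => Real.exp (a * Real.cos (θ - φ))) volume b c :=
  (contExpCos a φ).intervalIntegrable b c

lemma integral_exp_cos_shift (a φ : ℝ) :
    ∫ θ in (0:ℝ)..(2 * π), Real.exp (a * Real.cos (θ - φ)) = 2 * π * besselI0 a := by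
  have hper : Function.Periodic (fun θ : ℝ => Real.exp (a * Real.cos θ)) (2 * π) := by
    intro x; simp [Real.cos_add_two_pi]
  have h1 : (∫ θ in (0:ℝ)..(2 * π), Real.exp (a * Real.cos (θ - φ)))
      = ∫ θ in (0 - φ)..(2 * π - φ), Real.exp (a * Real.cos θ) :=
    intervalIntegral.integral_comp_sub_right (fun θ => Real.exp (a * Real.cos θ)) φ
  have h2 := hper.intervalIntegral_add_eq (-φ) 0
  have hπ : π ≠ 0 := Real.pi_ne_zero
  rw [h1]
  rw [show (0 - φ) = -φ by ring, show (2 * π - φ) = -φ + 2 * π by ring, h2]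
  rw [besselI0]
  rw [zero_add]
  field_simp

lemma besselI0_pos (k : ℝ) : 0 < besselI0 k := by
  rw [besselI0]
  have h : 0 < ∫ θ in (0:ℝ)..(2 * π), Real.exp (k * Real.cos θ) := by
    apply intervalIntegral.intervalIntegral_pos_of_pos
    · exact (by fun_prop : Continuous fun θ : ℝ => Real.exp (k * Real.cos θ)).intervalIntegrable _ _
    · intro x; exact Real.exp_pos _
    · positivity
  positivity

lemma besselI0_zero : besselI0 0 = 1 := by
  rw [besselI0]
  simp [intervalIntegral.integral_const, Real.pi_ne_zero]
  field_simp

lemma cnorm_formula (k : ℝ) :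
    Cnorm k = (besselI0 (2 * k) + 1 + 2 * besselI0 (Real.sqrt 2 * k))
      / (4 * (besselI0 k)^2) := by
  have h2 : Real.sqrt 2 * Real.sqrt 2 = 2 := Real.mul_self_sqrt (by norm_num)
  set B := besselI0 k with hB
  have hBpos : 0 < B := besselI0_pos k
  -- vectors of coefficients, amplitudes and phases
  set coef : Fin 9 → ℝ := ![1,1,1,1,4,2,2,2,2] with hcoef
  set amp : Fin 9 → ℝ := ![2*k,2*k,2*k,2*k,0,Real.sqrt 2*k,Real.sqrt 2*k,Real.sqrt 2*k,Real.sqrt 2*k] with hamp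
  set pha : Fin 9 → ℝ := ![0,π,π/2,3*π/2,0,π/4,5*π/4,7*π/4,3*π/4] with hpha
  have expand : ∀ θ : ℝ, (π / 2) * (bvM k 0 θ + bvM k (π / 2) θ)^2
      = (π/2) * (1/(4*π*B))^2 *
        ∑ i : Fin 9, coef i * Real.exp (amp i * Real.cos (θ - pha i)) := by
    intro θ
    set A1 := Real.exp (k * Real.cos θ) with hA1
    set A2 := Real.exp (-(k * Real.cos θ)) with hA2
    set A3 := Real.exp (k * Real.sin θ) with hA3
    set A4 := Real.exp (-(k * Real.sin θ)) with hA4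
    have hs : Real.cos (θ - π/2) = Real.sin θ := by
      rw [Real.cos_sub, Real.cos_pi_div_two, Real.sin_pi_div_two]; ring
    have e1 : Real.exp (2*k * Real.cos (θ - 0)) = A1 * A1 := by
      rw [sub_zero, hA1, ← Real.exp_add]; congr 1; ring
    have e2 : Real.exp (2*k * Real.cos (θ - π)) = A2 * A2 := by
      rw [Real.cos_sub_pi, hA2, ← Real.exp_add]; congr 1; ring
    have e3 : Real.exp (2*k * Real.cos (θ - π/2)) = A3 * A3 := by
      rw [hs, hA3, ← Real.exp_add]; congr 1; ring
    have e4 : Real.exp (2*k * Real.cos (θ - 3*π/2)) = A4 * A4 := by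
      rw [show θ - 3*π/2 = (θ + π/2) - 2*π by ring, Real.cos_sub_two_pi,
        Real.cos_add_pi_div_two, hA4, ← Real.exp_add]; congr 1; ring
    have e5 : Real.exp (0 * Real.cos (θ - 0)) = 1 := by simp
    have e6 : Real.exp (Real.sqrt 2 * k * Real.cos (θ - π/4)) = A1 * A3 := by
      rw [Real.cos_sub, Real.cos_pi_div_four, Real.sin_pi_div_four, hA1, hA3, ← Real.exp_add]
      congr 1
      linear_combination (k * (Real.cos θ + Real.sin θ)/2) * h2
    have e7 : Real.exp (Real.sqrt 2 * k * Real.cos (θ - 5*π/4)) = A2 * A4 := by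
      rw [show θ - 5*π/4 = (θ - π/4) - π by ring, Real.cos_sub_pi, Real.cos_sub,
        Real.cos_pi_div_four, Real.sin_pi_div_four, hA2, hA4, ← Real.exp_add]
      congr 1
      linear_combination (-k * (Real.cos θ + Real.sin θ)/2) * h2
    have e8 : Real.exp (Real.sqrt 2 * k * Real.cos (θ - 7*π/4)) = A1 * A4 := by
      rw [show θ - 7*π/4 = (θ + π/4) - 2*π by ring, Real.cos_sub_two_pi, Real.cos_add,
        Real.cos_pi_div_four, Real.sin_pi_div_four, hA1, hA4, ← Real.exp_add]
      congr 1
      linear_combination (k * (Real.cos θ - Real.sin θ)/2) * h2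
    have e9 : Real.exp (Real.sqrt 2 * k * Real.cos (θ - 3*π/4)) = A2 * A3 := by
      rw [show θ - 3*π/4 = (θ + π/4) - π by ring, Real.cos_sub_pi, Real.cos_add,
        Real.cos_pi_div_four, Real.sin_pi_div_four, hA2, hA3, ← Real.exp_add]
      congr 1
      linear_combination (-k * (Real.cos θ - Real.sin θ)/2) * h2
    have hA12 : A1 * A2 = 1 := by
      rw [hA1, hA2, ← Real.exp_add, add_neg_cancel, Real.exp_zero]
    have hA34 : A3 * A4 = 1 := by
      rw [hA3, hA4, ← Real.exp_add, add_neg_cancel, Real.exp_zero]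
    rw [Fin.sum_univ_succ, Fin.sum_univ_succ, Fin.sum_univ_succ, Fin.sum_univ_succ,
      Fin.sum_univ_succ, Fin.sum_univ_succ, Fin.sum_univ_succ, Fin.sum_univ_succ,
      Fin.sum_univ_one]
    simp only [hcoef, hamp, hpha, Matrix.cons_val_zero, Matrix.cons_val_succ]
    rw [e1, e2, e3, e4, e5, e6, e7, e8, e9]
    simp only [bvM, sub_zero, hs, ← hA1, ← hA2, ← hA3, ← hA4, ← hB]
    linear_combination ((π/2) * (1/(4*π*B))^2) * (2 * hA12 + 2 * hA34)
  have hCnorm : Cnorm k = (π/2) * (1/(4*π*B))^2 *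
      ∑ i : Fin 9, coef i * (2 * π * besselI0 (amp i)) := by
    rw [Cnorm]
    simp only [expand]
    rw [intervalIntegral.integral_const_mul]
    congr 1
    rw [intervalIntegral.integral_finset_sum (fun i _ =>
      ((intExpCos (amp i) (pha i) 0 (2*π)).const_mul (coef i)))]
    refine Finset.sum_congr rfl fun i _ => ?_
    rw [intervalIntegral.integral_const_mul, integral_exp_cos_shift]
  rw [hCnorm]
  have : ∑ i : Fin 9, coef i * (2 * π * besselI0 (amp i))
      = 2 * π * (4 * besselI0 (2*k) + 4 + 8 * besselI0 (Real.sqrt 2 * k)) := by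
    rw [Fin.sum_univ_succ, Fin.sum_univ_succ, Fin.sum_univ_succ, Fin.sum_univ_succ,
      Fin.sum_univ_succ, Fin.sum_univ_succ, Fin.sum_univ_succ, Fin.sum_univ_succ,
      Fin.sum_univ_one]
    simp only [hcoef, hamp, Matrix.cons_val_zero, Matrix.cons_val_succ, besselI0_zero]
    ring
  rw [this]
  have hπ : π ≠ 0 := Real.pi_ne_zero
  field_simp
  ring

/-- `C(k) = (I₀(2k) + 1 + 2 I₀(√2 k)) / (4 I₀(k)²)` and `lim_{k→0⁺} C(k) = 1`. -/
theorem crisscross_normalization_constant :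
    (∀ k : ℝ, 0 < k →
        Cnorm k = (besselI0 (2 * k) + 1 + 2 * besselI0 (Real.sqrt 2 * k))
          / (4 * (besselI0 k)^2))
      ∧ Tendsto Cnorm (nhdsWithin 0 (Set.Ioi 0)) (nhds 1) := by
  constructor
  · exact fun k _ => cnorm_formula k
  · -- limit
    have hI0 : Tendsto besselI0 (nhdsWithin 0 (Set.Ioi 0)) (nhds 1) := by
      have hlow : Tendsto (fun k : ℝ => Real.exp (-k)) (nhdsWithin 0 (Set.Ioi 0)) (nhds 1) := by
        have : Tendsto (fun k : ℝ => Real.exp (-k)) (nhds 0) (nhds 1) := by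
          have := (Real.continuous_exp.comp continuous_neg).tendsto 0
          simpa [Function.comp_def] using this
        exact this.mono_left nhdsWithin_le_nhds
      have hup : Tendsto (fun k : ℝ => Real.exp k) (nhdsWithin 0 (Set.Ioi 0)) (nhds 1) := by
        have : Tendsto (fun k : ℝ => Real.exp k) (nhds 0) (nhds 1) := by
          simpa using Real.continuous_exp.tendsto 0
        exact this.mono_left nhdsWithin_le_nhds
      refine tendsto_of_tendsto_of_tendsto_of_le_of_le' hlow hup ?_ ?_
      · filter_upwards [self_mem_nhdsWithin] with k hk
        have hk0 : (0:ℝ) ≤ k := le_of_lt hk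
        rw [besselI0]
        have hmono : ∫ θ in (0:ℝ)..(2*π), Real.exp (-k)
            ≤ ∫ θ in (0:ℝ)..(2*π), Real.exp (k * Real.cos θ) := by
          apply intervalIntegral.integral_mono_on (by positivity)
            (intervalIntegrable_const)
            ((by fun_prop : Continuous fun θ : ℝ => Real.exp (k * Real.cos θ)).intervalIntegrable _ _)
          intro x _
          apply Real.exp_le_exp.mpr
          nlinarith [Real.neg_one_le_cos x]
        have harea : ∫ θ in (0:ℝ)..(2*π), Real.exp (-k) = 2*π * Real.exp (-k) := by
          rw [intervalIntegral.integral_const, smul_eq_mul]; ring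
        rw [harea] at hmono
        have hπ : (0:ℝ) < π := Real.pi_pos
        calc Real.exp (-k) = (1/(2*π)) * (2*π*Real.exp (-k)) := by field_simp
          _ ≤ (1/(2*π)) * ∫ θ in (0:ℝ)..(2*π), Real.exp (k * Real.cos θ) := by
              apply mul_le_mul_of_nonneg_left hmono (by positivity)
      · filter_upwards [self_mem_nhdsWithin] with k hk
        have hk0 : (0:ℝ) ≤ k := le_of_lt hk
        rw [besselI0]
        have hmono : (∫ θ in (0:ℝ)..(2*π), Real.exp (k * Real.cos θ))
            ≤ ∫ θ in (0:ℝ)..(2*π), Real.exp k := by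
          apply intervalIntegral.integral_mono_on (by positivity)
            ((by fun_prop : Continuous fun θ : ℝ => Real.exp (k * Real.cos θ)).intervalIntegrable _ _)
            (intervalIntegrable_const)
          intro x _
          apply Real.exp_le_exp.mpr
          nlinarith [Real.cos_le_one x]
        have harea : ∫ θ in (0:ℝ)..(2*π), Real.exp k = 2*π * Real.exp k := by
          rw [intervalIntegral.integral_const, smul_eq_mul]; ring
        rw [harea] at hmono
        have hπ : (0:ℝ) < π := Real.pi_pos
        calc (1/(2*π)) * ∫ θ in (0:ℝ)..(2*π), Real.exp (k * Real.cos θ)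
            ≤ (1/(2*π)) * (2*π*Real.exp k) := by
              apply mul_le_mul_of_nonneg_left hmono (by positivity)
          _ = Real.exp k := by field_simp
    have hcomp : ∀ c : ℝ, 0 < c →
        Tendsto (fun k : ℝ => besselI0 (c * k)) (nhdsWithin 0 (Set.Ioi 0)) (nhds 1) := by
      intro c hc
      apply hI0.comp
      apply tendsto_nhdsWithin_of_tendsto_nhds_of_eventually_within
      · have : Tendsto (fun k : ℝ => c * k) (nhds 0) (nhds (c * 0)) :=
          (continuous_const.mul continuous_id).tendsto 0
        simpa using this.mono_left nhdsWithin_le_nhds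
      · filter_upwards [self_mem_nhdsWithin] with k hk
        exact mul_pos hc hk
    have h2k := hcomp 2 (by norm_num)
    have hsk := hcomp (Real.sqrt 2) (Real.sqrt_pos.mpr (by norm_num))
    have hfin : Tendsto (fun k : ℝ =>
        (besselI0 (2 * k) + 1 + 2 * besselI0 (Real.sqrt 2 * k)) / (4 * (besselI0 k)^2))
        (nhdsWithin 0 (Set.Ioi 0)) (nhds 1) := by
      have hone : Tendsto (fun _ : ℝ => (1:ℝ)) (nhdsWithin 0 (Set.Ioi 0)) (nhds 1) :=
        tendsto_const_nhds
      have htwo : Tendsto (fun _ : ℝ => (2:ℝ)) (nhdsWithin 0 (Set.Ioi 0)) (nhds 2) :=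
        tendsto_const_nhds
      have hfour : Tendsto (fun _ : ℝ => (4:ℝ)) (nhdsWithin 0 (Set.Ioi 0)) (nhds 4) :=
        tendsto_const_nhds
      have hnum := (h2k.add hone).add (htwo.mul hsk)
      have hden := hfour.mul (hI0.pow 2)
      have h := hnum.div hden (by norm_num)
      have : ((1:ℝ) + 1 + 2 * 1) / (4 * 1 ^ 2) = 1 := by norm_num
      rw [this] at h
      exact h.congr fun k => by simp [Pi.div_apply]
    exact hfin.congr fun k => (cnorm_formula k).symm
end
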